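/- Let d be a nonzero integer and let η be a positive rational number with v_p(η) = 0 for every prime p dividing 2d. Suppose v_p(η - 1) ≥ 1 for every odd prime p dividing d, and v_2(η - 1) ≥ 3. Then the generalized Jacobi symbol (d|η) := ∏_{p : v_p(η) ≠ 0} (d|p)^{v_p(η)} equals 1, where each (d|p) is a Legendre symbol. -/

import Mathlib

/-- The Legendre symbol `(a | p)` for a natural number `p` (defined to be `0` if `p` is not
prime). -/
noncomputable def legSym (p : ℕ) (a : ℤ) : ℤ :=
  if hp : p.Prime then
    haveI : Fact p.Prime := ⟨hp⟩
    legendreSym p a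
  else 0

/-- The generalized Jacobi symbol `(d | η) = ∏_{p : v_p(η) ≠ 0} (d|p)^{v_p(η)}`, computed
in `ℚ` since the exponents `v_p(η)` may be negative. -/
noncomputable def genJacobi (d : ℤ) (η : ℚ) : ℚ :=
  ∏ᶠ (p : ℕ) (_ : p.Prime) (_ : padicValRat p η ≠ 0),
    (legSym p d : ℚ) ^ (padicValRat p η)

open scoped NumberTheorySymbols

lemma legSym_eq {p : ℕ} (hp : p.Prime) (d : ℤ) :
    legSym p d = @legendreSym p ⟨hp⟩ d := by
  simp [legSym, hp]

lemma jacobiSym_eq_prod (d : ℤ) (b : ℕ) :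
    J(d | b) = ∏ p ∈ b.primeFactors, legSym p d ^ b.factorization p := by
  rw [jacobiSym]
  have h1 : (b.primeFactorsList.pmap (fun p pp => @legendreSym p ⟨pp⟩ d) fun _ pf =>
      Nat.prime_of_mem_primeFactorsList pf)
      = b.primeFactorsList.map (fun p => legSym p d) := by
    rw [← List.pmap_eq_map (p := fun p : ℕ => p.Prime) (f := fun p => legSym p d)
      (fun _ pf => Nat.prime_of_mem_primeFactorsList pf)]
    exact List.pmap_congr_left _ (fun p _ h₁ h₂ => (legSym_eq h₁ d).symm)
  rw [h1, Finset.prod_list_map_count]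
  apply Finset.prod_congr rfl
  intro p hp
  rw [Nat.primeFactorsList_count_eq]

lemma zpow_neg_of_sq {x : ℚ} (h2 : x * x = 1) (n : ℕ) : x ^ (-(n:ℤ)) = x ^ (n:ℤ) := by
  have h : x ^ (n:ℤ) * x ^ (n:ℤ) = 1 := by rw [← mul_zpow, h2, one_zpow]
  rw [zpow_neg]
  exact inv_eq_of_mul_eq_one_right h

lemma genJacobi_eq (d : ℤ) (η : ℚ) (hη : 0 < η)
    (hcop2 : ∀ p : ℕ, p.Prime → (p ∣ η.num.natAbs ∨ p ∣ η.den) → ¬ (p:ℤ) ∣ d) :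
    genJacobi d η = ((J(d | η.num.natAbs) * J(d | η.den) : ℤ) : ℚ) := by
  classical
  set a : ℕ := η.num.natAbs with ha_def
  set b : ℕ := η.den with hb_def
  have ha0 : a ≠ 0 := Int.natAbs_ne_zero.mpr (Rat.num_ne_zero.mpr hη.ne')
  have hb0 : b ≠ 0 := η.den_nz
  have hcop : Nat.Coprime a b := η.reduced
  have hval : ∀ p : ℕ, padicValRat p η = (padicValNat p a : ℤ) - padicValNat p b := by
    intro p; rw [padicValRat_def]; rfl
  -- membership characterization
  have hmem : ∀ p : ℕ, p.Prime → (padicValRat p η ≠ 0 ↔ p ∈ (a*b).primeFactors) := by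
    intro p hp
    rw [Nat.mem_primeFactors, hval p]
    constructor
    · intro h
      refine ⟨hp, ?_, mul_ne_zero ha0 hb0⟩
      by_contra hnd
      rw [hp.dvd_mul] at hnd
      push_neg at hnd
      rw [padicValNat.eq_zero_of_not_dvd hnd.1, padicValNat.eq_zero_of_not_dvd hnd.2] at h
      simp at h
    · rintro ⟨-, hdvd, -⟩
      rw [hp.dvd_mul] at hdvd
      haveI : Fact p.Prime := ⟨hp⟩
      rcases hdvd with h | h
      · have h1 : 1 ≤ padicValNat p a := one_le_padicValNat_of_dvd ha0 h
        have h2 : padicValNat p b = 0 :=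
          padicValNat.eq_zero_of_not_dvd (fun hb => hp.one_lt.ne' (Nat.eq_one_of_dvd_coprimes hcop h hb))
        omega
      · have h1 : 1 ≤ padicValNat p b := one_le_padicValNat_of_dvd hb0 h
        have h2 : padicValNat p a = 0 :=
          padicValNat.eq_zero_of_not_dvd (fun hb => hp.one_lt.ne' (Nat.eq_one_of_dvd_coprimes hcop hb h))
        omega
  have hfin : genJacobi d η = ∏ p ∈ (a*b).primeFactors, (legSym p d : ℚ) ^ padicValRat p η := by
    rw [genJacobi]
    rw [finprod_eq_prod_of_mulSupport_subset _ (s := (a*b).primeFactors) ?_]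
    · apply Finset.prod_congr rfl
      intro p hp
      have hp' : p.Prime := Nat.prime_of_mem_primeFactors hp
      have hv : padicValRat p η ≠ 0 := (hmem p hp').mpr hp
      simp [finprod_eq_if, hp', hv]
    · intro p hp
      simp only [Function.mem_mulSupport, finprod_eq_if] at hp
      split_ifs at hp with h1 h2
      · exact (hmem p h1).mp h2
      · simp at hp
      · simp at hp
  have hsplit : (a*b).primeFactors = a.primeFactors ∪ b.primeFactors :=
    Nat.primeFactors_mul ha0 hb0
  have hdisj : Disjoint a.primeFactors b.primeFactors := hcop.disjoint_primeFactors
  have hA : ∏ p ∈ a.primeFactors, (legSym p d:ℚ)^(padicValRat p η) = ((J(d|a) : ℤ) : ℚ) := by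
    rw [jacobiSym_eq_prod, Int.cast_prod]
    apply Finset.prod_congr rfl
    intro p hp
    have hp' := Nat.prime_of_mem_primeFactors hp
    have hpa : p ∣ a := Nat.dvd_of_mem_primeFactors hp
    have hpb : ¬ p ∣ b := fun hb => hp'.one_lt.ne' (Nat.eq_one_of_dvd_coprimes hcop hpa hb)
    rw [hval p, padicValNat.eq_zero_of_not_dvd hpb, Nat.factorization_def a hp',
      Nat.cast_zero, sub_zero, zpow_natCast, Int.cast_pow]
  have hB : ∏ p ∈ b.primeFactors, (legSym p d:ℚ)^(padicValRat p η) = ((J(d|b) : ℤ) : ℚ) := by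
    rw [jacobiSym_eq_prod, Int.cast_prod]
    apply Finset.prod_congr rfl
    intro p hp
    have hp' := Nat.prime_of_mem_primeFactors hp
    haveI : Fact p.Prime := ⟨hp'⟩
    have hpb : p ∣ b := Nat.dvd_of_mem_primeFactors hp
    have hpa : ¬ p ∣ a := fun hba => hp'.one_lt.ne' (Nat.eq_one_of_dvd_coprimes hcop hba hpb)
    have hnd : ¬ (p:ℤ) ∣ d := hcop2 p hp' (Or.inr hpb)
    have hsq : (legSym p d : ℚ) * legSym p d = 1 := by
      have : (d : ZMod p) ≠ 0 := fun h => hnd ((ZMod.intCast_zmod_eq_zero_iff_dvd d p).mp h)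
      rcases legendreSym.eq_one_or_neg_one p this with h | h <;>
        rw [legSym_eq hp'] <;> rw [h] <;> norm_num
    rw [hval p, padicValNat.eq_zero_of_not_dvd hpa, Nat.factorization_def b hp',
      Nat.cast_zero, zero_sub, zpow_neg_of_sq hsq, zpow_natCast, Int.cast_pow]
  rw [hfin, hsplit, Finset.prod_union hdisj, hA, hB]
  push_cast
  ring

theorem stmt8 (d : ℤ) (hd : d ≠ 0) (η : ℚ) (hη : 0 < η)
    (hunit : ∀ p : ℕ, p.Prime → (p : ℤ) ∣ 2 * d → padicValRat p η = 0)
    (hodd : ∀ p : ℕ, p.Prime → Odd p → (p : ℤ) ∣ d →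
      (η - 1 = 0 ∨ 1 ≤ padicValRat p (η - 1)))
    (h2 : η - 1 = 0 ∨ 3 ≤ padicValRat 2 (η - 1)) :
    genJacobi d η = 1 := by
  classical
  set a : ℕ := η.num.natAbs with ha_def
  set b : ℕ := η.den with hb_def
  have ha0 : a ≠ 0 := Int.natAbs_ne_zero.mpr (Rat.num_ne_zero.mpr hη.ne')
  have hb0 : b ≠ 0 := η.den_nz
  have hcop : Nat.Coprime a b := η.reduced
  have hanum : (a:ℤ) = η.num := Int.natAbs_of_nonneg (Rat.num_nonneg.mpr hη.le)
  have hval : ∀ p : ℕ, padicValRat p η = (padicValNat p a : ℤ) - padicValNat p b := by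
    intro p; rw [padicValRat_def]; rfl
  have hnd : ∀ p : ℕ, p.Prime → (p ∣ a ∨ p ∣ b) → ¬ (p:ℤ) ∣ 2*d := by
    intro p hp hdvd h2d
    have h0 := hunit p hp h2d
    rw [hval p] at h0
    haveI : Fact p.Prime := ⟨hp⟩
    rcases hdvd with h | h
    · have h1 : 1 ≤ padicValNat p a := one_le_padicValNat_of_dvd ha0 h
      have h2' : padicValNat p b = 0 :=
        padicValNat.eq_zero_of_not_dvd (fun hb => hp.one_lt.ne' (Nat.eq_one_of_dvd_coprimes hcop h hb))
      omega
    · have h1 : 1 ≤ padicValNat p b := one_le_padicValNat_of_dvd hb0 h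
      have h2' : padicValNat p a = 0 :=
        padicValNat.eq_zero_of_not_dvd (fun hb => hp.one_lt.ne' (Nat.eq_one_of_dvd_coprimes hcop hb h))
      omega
  have hcop2 : ∀ p : ℕ, p.Prime → (p ∣ a ∨ p ∣ b) → ¬ (p:ℤ) ∣ d :=
    fun p hp h hdd => hnd p hp h (hdd.mul_left 2)
  rw [genJacobi_eq d η hη hcop2]
  suffices hJ : J(d | a) * J(d | b) = 1 by rw [hJ]; norm_num
  by_cases hη1 : η = 1
  · have h1 : a = 1 ∧ b = 1 := by
      constructor <;> simp [ha_def, hb_def, hη1]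
    rw [h1.1, h1.2]; simp
  -- main case
  have hξ : η - 1 ≠ 0 := sub_ne_zero.mpr hη1
  have hbodd : ¬ 2 ∣ b := fun h => hnd 2 Nat.prime_two (Or.inr h) ⟨d, rfl⟩
  have haodd : ¬ 2 ∣ a := fun h => hnd 2 Nat.prime_two (Or.inl h) ⟨d, rfl⟩
  have hcong : ∀ p : ℕ, p.Prime → ¬ p ∣ b → ∀ k : ℕ,
      (k:ℤ) ≤ padicValRat p (η-1) → (p:ℤ)^k ∣ (a:ℤ) - b := by
    intro p hp hpb k hk
    haveI : Fact p.Prime := ⟨hp⟩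
    set ξ : ℚ := η - 1 with hξdef
    have hden : ξ.den ∣ b := by
      have h := Rat.add_den_dvd η (-1)
      simpa [hξdef, sub_eq_add_neg] using h
    have hpden : ¬ p ∣ ξ.den := fun h => hpb (h.trans hden)
    have hnum0 : ξ.num ≠ 0 := Rat.num_ne_zero.mpr hξ
    have hv : padicValRat p ξ = (padicValNat p ξ.num.natAbs : ℤ) := by
      rw [padicValRat_def, padicValNat.eq_zero_of_not_dvd hpden]
      simp [padicValInt]
    rw [hv] at hk
    have hk' : k ≤ padicValNat p ξ.num.natAbs := by exact_mod_cast hk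
    have hdvd1 : (p:ℤ)^k ∣ ξ.num := by
      have h1 : p^k ∣ ξ.num.natAbs := (pow_dvd_pow p hk').trans pow_padicValNat_dvd
      have h2 : ((p^k:ℕ):ℤ) ∣ ((ξ.num.natAbs:ℕ):ℤ) := Int.natCast_dvd_natCast.mpr h1
      have h3 : ((ξ.num.natAbs:ℕ):ℤ) ∣ ξ.num := Int.natAbs_dvd.mpr dvd_rfl
      exact_mod_cast h2.trans h3
    -- cross multiplication identity
    have hbQ : (b:ℚ) ≠ 0 := Nat.cast_ne_zero.mpr hb0
    have hdQ : (ξ.den:ℚ) ≠ 0 := Nat.cast_ne_zero.mpr ξ.den_nz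
    have hkey : ξ.num * b = ((a:ℤ) - b) * ξ.den := by
      have e1 : ξ * (ξ.den:ℚ) = (ξ.num:ℚ) := by
        nth_rewrite 1 [← Rat.num_div_den ξ]
        exact div_mul_cancel₀ _ hdQ
      have e2 : η * ((η.den:ℕ):ℚ) = (η.num:ℚ) := by
        nth_rewrite 1 [← Rat.num_div_den η]
        exact div_mul_cancel₀ _ (Nat.cast_ne_zero.mpr η.den_nz)
      have haQ : ((a:ℕ):ℚ) = ((η.num:ℤ):ℚ) := by exact_mod_cast hanum
      have eηb : η * (b:ℚ) = (a:ℚ) := by rw [hb_def, e2, haQ]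
      have hQ : (ξ.num:ℚ) * b = ((a:ℚ) - b) * ξ.den := by
        calc (ξ.num:ℚ) * b = (ξ * ξ.den) * b := by rw [e1]
          _ = ((η * b) - b) * ξ.den := by rw [hξdef]; ring
          _ = ((a:ℚ) - b) * ξ.den := by rw [eηb]
      exact_mod_cast hQ
    have hdvd2 : (p:ℤ)^k ∣ ((a:ℤ) - b) * ξ.den := hkey ▸ hdvd1.mul_right (b:ℤ)
    have hppden : ¬ (p:ℤ) ∣ ((ξ.den:ℕ):ℤ) := by
      rw [Int.natCast_dvd_natCast]; exact hpden
    have hcopr : IsCoprime ((p:ℤ)^k) ((ξ.den:ℕ):ℤ) :=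
      (((Nat.prime_iff_prime_int.mp hp).coprime_iff_not_dvd).mpr hppden).pow_left
    exact hcopr.dvd_of_dvd_mul_right hdvd2
  have h8 : (8:ℤ) ∣ (a:ℤ) - b := by
    have := hcong 2 Nat.prime_two hbodd 3 (h2.resolve_left hξ)
    norm_num at this
    exact this
  have hpd : ∀ p:ℕ, p.Prime → p ≠ 2 → (p:ℤ) ∣ d → (p:ℤ) ∣ (a:ℤ) - b := by
    intro p hp hp2 hpdvd
    have hpb : ¬ p ∣ b := fun h => hnd p hp (Or.inr h) (hpdvd.mul_left 2)
    have := hcong p hp hpb 1 ((hodd p hp (hp.odd_of_ne_two hp2) hpdvd).resolve_left hξ)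
    simpa using this
  -- squarefree decomposition
  obtain ⟨D₀, s, hsd, hDsf⟩ := Nat.sq_mul_squarefree d.natAbs
  have hD₀0 : D₀ ≠ 0 := hDsf.ne_zero
  obtain ⟨D, hDdef⟩ : ∃ D : ℤ, D = d.sign * D₀ := ⟨_, rfl⟩
  have hdD : d = (s:ℤ)^2 * D := by
    have h2' : ((s^2*D₀ : ℕ):ℤ) = (d.natAbs:ℤ) := by exact_mod_cast hsd
    rw [hDdef]
    calc d = d.sign * d.natAbs := (Int.sign_mul_natAbs d).symm
      _ = d.sign * ((s:ℤ)^2 * D₀) := by rw [← h2']; push_cast; ring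
      _ = (s:ℤ)^2 * (d.sign * D₀) := by ring
  have hDabs : D.natAbs = D₀ := by
    rw [hDdef, Int.natAbs_mul, Int.natAbs_sign_of_ne_zero hd, one_mul, Int.natAbs_natCast]
  have hDd : D ∣ d := Dvd.intro_left ((s:ℤ)^2) hdD.symm
  -- a ≠ b
  have hab_ne : (a:ℤ) - b ≠ 0 := by
    intro h
    apply hη1
    have hab : η.num = (η.den : ℤ) := by omega
    rw [← Rat.num_div_den η, hab]
    push_cast
    exact div_self (by exact_mod_cast hb0)
  set mN : ℕ := ((a:ℤ) - b).natAbs with hmNdef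
  have hmN0 : mN ≠ 0 := Int.natAbs_ne_zero.mpr hab_ne
  -- odd part of D₀
  set u : ℕ := if 2 ∣ D₀ then D₀ / 2 else D₀ with hudef
  have huD : u ∣ D₀ := by
    rw [hudef]; split
    · exact Nat.div_dvd_of_dvd ‹_›
    · exact dvd_rfl
  have hu0 : u ≠ 0 := fun h => hD₀0 (Nat.eq_zero_of_zero_dvd (h ▸ huD))
  have huodd : ¬ 2 ∣ u := by
    rw [hudef]; split
    · rename_i h
      intro h2u
      have h4 : 2*2 ∣ D₀ := by
        obtain ⟨c, hc⟩ := h2u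
        obtain ⟨e, he⟩ := h
        exact ⟨c, by omega⟩
      exact Nat.prime_two.not_isUnit (hDsf 2 h4)
    · exact ‹¬ 2 ∣ D₀›
  have husq : Squarefree u := hDsf.squarefree_of_dvd huD
  have h4D : 4*D₀ ∣ 8*u := by
    rw [hudef]; split
    · rename_i h
      obtain ⟨c, hc⟩ := h
      subst hc
      rw [Nat.mul_div_cancel_left c (by norm_num)]
      exact ⟨1, by ring⟩
    · exact ⟨2, by ring⟩
  have hu_dvd : u ∣ mN := by
    rw [← Nat.factorization_le_iff_dvd hu0 hmN0]
    intro q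
    by_cases hq : q.Prime
    · by_cases hqu : q ∣ u
      · have hle1 : u.factorization q ≤ 1 :=
          (Nat.squarefree_iff_factorization_le_one hu0).mp husq q
        have hq2 : q ≠ 2 := fun h => huodd (h ▸ hqu)
        have hqd : (q:ℤ) ∣ d := by
          apply Int.dvd_natAbs.mp
          exact_mod_cast Int.natCast_dvd_natCast.mpr ((hqu.trans huD).trans (hDabs ▸ Int.natAbs_dvd_natAbs.mpr hDd))
        have hqm : q ∣ mN := by
          have := hpd q hq hq2 hqd
          rw [hmNdef]
          exact Int.natCast_dvd_natCast.mp (by simpa using Int.dvd_natAbs.mpr this)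
        have : 1 ≤ mN.factorization q := hq.factorization_pos_of_dvd hmN0 hqm
        omega
      · rw [Nat.factorization_eq_zero_of_not_dvd hqu]; exact Nat.zero_le _
    · rw [Nat.factorization_eq_zero_of_not_prime _ hq]; exact Nat.zero_le _
  have h8_dvd : (8:ℕ) ∣ mN := by
    rw [hmNdef]
    exact Int.natCast_dvd_natCast.mp (by simpa using Int.dvd_natAbs.mpr h8)
  have hco8u : Nat.Coprime 8 u := by
    have : Nat.Coprime 2 u := (Nat.Prime.coprime_iff_not_dvd Nat.prime_two).mpr huodd
    have h8eq : (8:ℕ) = 2^3 := by norm_num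
    rw [h8eq]
    exact this.pow_left 3
  have h8u : 8*u ∣ mN := Nat.Coprime.mul_dvd_of_dvd_of_dvd hco8u h8_dvd hu_dvd
  have h4Dm : 4*D₀ ∣ mN := h4D.trans h8u
  have hmod : a % (4*D₀) = b % (4*D₀) := by
    have h1 : ((4*D₀ : ℕ) : ℤ) ∣ (b:ℤ) - a := by
      have : ((4*D₀ : ℕ) : ℤ) ∣ (a:ℤ) - b := by
        have := Int.natCast_dvd_natCast.mpr h4Dm
        rw [hmNdef] at this
        exact this.trans (Int.natAbs_dvd.mpr dvd_rfl)
      simpa using this.neg_right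
    exact (Nat.modEq_iff_dvd.mpr h1 : a ≡ b [MOD 4*D₀])
  -- coprimality facts
  have hgcd : ∀ n : ℕ, n ≠ 0 → (∀ q : ℕ, q.Prime → q ∣ n → ¬ (q:ℤ) ∣ 2*d) →
      Nat.Coprime d.natAbs n := by
    intro n hn h
    by_contra hne
    obtain ⟨q, hq, hqd⟩ := Nat.exists_prime_and_dvd hne
    have hq1 : q ∣ d.natAbs := hqd.trans (Nat.gcd_dvd_left _ _)
    have hq2 : q ∣ n := hqd.trans (Nat.gcd_dvd_right _ _)
    have : (q:ℤ) ∣ d := Int.dvd_natAbs.mp (Int.natCast_dvd_natCast.mpr hq1)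
    exact h q hq hq2 (this.mul_left 2)
  have hga : Nat.Coprime d.natAbs a :=
    hgcd a ha0 (fun q hq hqa => hnd q hq (Or.inl hqa))
  have hgb : Nat.Coprime d.natAbs b :=
    hgcd b hb0 (fun q hq hqb => hnd q hq (Or.inr hqb))
  have hs_dvd : s ∣ d.natAbs := (Dvd.intro s rfl : s ∣ s*s).trans (by rw [← sq]; exact ⟨D₀, hsd.symm⟩)
  have hsa : Int.gcd (s:ℤ) (a:ℤ) = 1 := by
    have : Nat.Coprime s a := Nat.Coprime.coprime_dvd_left hs_dvd hga
    simpa [Int.gcd] using this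
  have hsb : Int.gcd (s:ℤ) (b:ℤ) = 1 := by
    have : Nat.Coprime s b := Nat.Coprime.coprime_dvd_left hs_dvd hgb
    simpa [Int.gcd] using this
  have hDb : Int.gcd D (b:ℤ) = 1 := by
    have : Nat.Coprime D.natAbs b :=
      Nat.Coprime.coprime_dvd_left (Int.natAbs_dvd_natAbs.mpr hDd) hgb
    simpa [Int.gcd] using this
  have hOa : Odd a := Nat.odd_iff.mpr (Nat.two_dvd_ne_zero.mp haodd)
  have hOb : Odd b := Nat.odd_iff.mpr (Nat.two_dvd_ne_zero.mp hbodd)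
  have key : J(D | a) = J(D | b) := by
    rw [jacobiSym.mod_right D hOa, jacobiSym.mod_right D hOb, hDabs, hmod]
  calc J(d | a) * J(d | b)
      = J(D | a) * J(D | b) := by
        rw [hdD, jacobiSym.mul_left, jacobiSym.mul_left, jacobiSym.sq_one' hsa,
          jacobiSym.sq_one' hsb, one_mul, one_mul]
    _ = J(D | b) * J(D | b) := by rw [key]
    _ = 1 := by
        have := jacobiSym.sq_one hDb
        rwa [sq] at this
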